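/- Let E be a vector bundle over M with a connection ∇ that is torsion free with respect to a vector bundle morphism ρ : E → TM. Then the curvature R of ∇ satisfies ρ( R(ρ(e₁),ρ(e₂))e₃ + R(ρ(e₂),ρ(e₃))e₁ + R(ρ(e₃),ρ(e₁))e₂ ) = 0 for all e₁, e₂, e₃ in a common fibre of E. -/

import Mathlib

/-! Abstract algebraic model of vector calculus on a manifold `M`:
`R` plays the role of the ring of smooth functions `C^∞(M)`,
`X` the `R`-module of vector fields on `M` (a Lie ring acting on `R` by
derivations), and `E` the `R`-module of sections of a vector bundle over `M`. -/

/-- The data of the Lie algebra of vector fields `X` acting by derivations on the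
ring `R` of functions, with the usual compatibilities. -/
structure VectorFieldCalculus (R X : Type*) [CommRing R] [LieRing X] [Module R X] where
  act : X → R → R
  act_add_left : ∀ x y f, act (x + y) f = act x f + act y f
  act_smul_left : ∀ (f : R) (x : X) (g : R), act (f • x) g = f * act x g
  act_add_right : ∀ x f g, act x (f + g) = act x f + act x g
  act_mul_right : ∀ x f g, act x (f * g) = f * act x g + g * act x f
  act_bracket : ∀ x y f, act ⁅x, y⁆ f = act x (act y f) - act y (act x f)
  bracket_smul : ∀ (x : X) (f : R) (y : X), ⁅x, f • y⁆ = f • ⁅x, y⁆ + (act x f) • y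

/-- A (Koszul) connection on the module of sections `E`, relative to the
vector-field calculus `C`. -/
structure ConnectionOn (R X E : Type*) [CommRing R] [LieRing X] [Module R X]
    [AddCommGroup E] [Module R E] (C : VectorFieldCalculus R X) where
  cov : X → E → E
  cov_add_left : ∀ x y s, cov (x + y) s = cov x s + cov y s
  cov_smul_left : ∀ (f : R) (x : X) (s : E), cov (f • x) s = f • cov x s
  cov_add_right : ∀ x s t, cov x (s + t) = cov x s + cov x t
  cov_leibniz : ∀ (x : X) (f : R) (s : E), cov x (f • s) = (C.act x f) • s + f • cov x s


/-- (Generalized first Bianchi identity.) If the connection `∇` on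
`E` is torsion free with respect to `ρ : E → TM`, then its curvature `R` satisfies
`ρ(R(ρ e₁, ρ e₂)e₃ + R(ρ e₂, ρ e₃)e₁ + R(ρ e₃, ρ e₁)e₂) = 0`. -/
theorem rho_firstBianchi_of_torsionFree
    {R X E : Type*} [CommRing R] [LieRing X] [Module R X]
    [AddCommGroup E] [Module R E]
    (C : VectorFieldCalculus R X) (D : ConnectionOn R X E C)
    (ρ : E →ₗ[R] X)
    (htf : ∀ s₁ s₂ : E,
      ρ (D.cov (ρ s₁) s₂ - D.cov (ρ s₂) s₁) = ⁅ρ s₁, ρ s₂⁆)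
    (Rc : X → X → E → E)
    (hRc : ∀ (x y : X) (s : E),
      Rc x y s = D.cov x (D.cov y s) - D.cov y (D.cov x s) - D.cov ⁅x, y⁆ s) :
    ∀ e₁ e₂ e₃ : E,
      ρ (Rc (ρ e₁) (ρ e₂) e₃ + Rc (ρ e₂) (ρ e₃) e₁ + Rc (ρ e₃) (ρ e₁) e₂) = 0 := by
  intro e₁ e₂ e₃
  -- basic consequences of additivity in the direction argument
  have hcov0 : ∀ s : E, D.cov 0 s = 0 := by
    intro s
    have h := D.cov_add_left 0 0 s
    rw [add_zero] at h
    exact (left_eq_add.mp h)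
  have hsub : ∀ (x y : X) (s : E), D.cov (x - y) s = D.cov x s - D.cov y s := by
    intro x y s
    have h := D.cov_add_left (x - y) y s
    rw [sub_add_cancel] at h
    rw [h]; abel
  have hkey : ∀ s t : E,
      ρ (D.cov (ρ s) t) = ρ (D.cov (ρ t) s) + ⁅ρ s, ρ t⁆ := by
    intro s t
    have h := htf s t
    rw [map_sub] at h
    rw [← h]; abel
  -- torsion-freeness in "direction" form
  have hb : ∀ s t : E, ⁅ρ s, ρ t⁆ = ρ (D.cov (ρ s) t) - ρ (D.cov (ρ t) s) := by
    intro s t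
    rw [← htf s t, map_sub]
  -- abbreviations
  set x₁ := ρ e₁ with hx₁
  set x₂ := ρ e₂ with hx₂
  set x₃ := ρ e₃ with hx₃
  -- expand the curvature and the brackets of the x's
  have hbr : ∀ s t u : E, D.cov ⁅ρ s, ρ t⁆ u
      = D.cov (ρ (D.cov (ρ s) t)) u - D.cov (ρ (D.cov (ρ t) s)) u := by
    intro s t u
    rw [hb s t, hsub]
  simp +zetaDelta only [hRc, map_add, map_sub, hbr]
  -- rewrite the six second-order terms via torsion-freeness
  rw [hkey e₁ (D.cov x₂ e₃), hkey e₂ (D.cov x₁ e₃),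
      hkey e₂ (D.cov x₃ e₁), hkey e₃ (D.cov x₂ e₁),
      hkey e₃ (D.cov x₁ e₂), hkey e₁ (D.cov x₃ e₂)]
  -- Jacobi identity
  have jac : ⁅x₁, ⁅x₂, x₃⁆⁆ + ⁅x₂, ⁅x₃, x₁⁆⁆ + ⁅x₃, ⁅x₁, x₂⁆⁆ = 0 := lie_jacobi x₁ x₂ x₃
  rw [hb e₂ e₃, hb e₃ e₁, hb e₁ e₂, lie_sub, lie_sub, lie_sub] at jac
  rw [← hx₁, ← hx₂, ← hx₃] at jac ⊢
  abel_nf at jac ⊢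
  convert jac using 2
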